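/- Let T be a strongly connected digraph with t ≥ 2 vertices and let H_1, ..., H_t be arbitrary digraphs each having at least two vertices. Then the composition Q = T[H_1, ..., H_t] is strong and has a good pair rooted at every vertex of Q. -/
import Mathlib


variable {V : Type*}

/-- A digraph (given by its arc relation) is strongly connected. -/
def Strong (A : V → V → Prop) : Prop :=
  ∀ x y : V, Relation.ReflTransGen A x y

/-- `B` is an out-branching of the digraph `A` rooted at `r`:
a spanning subdigraph in which every vertex is reachable from `r`,
every vertex other than `r` has in-degree exactly one, and `r` has in-degree zero. -/
def IsOutBranching (A B : V → V → Prop) (r : V) : Prop :=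
  (∀ x y, B x y → A x y) ∧
  (∀ v, Relation.ReflTransGen B r v) ∧
  (∀ v, v ≠ r → Nat.card {u : V // B u v} = 1) ∧
  (∀ u, ¬ B u r)

/-- `B` is an in-branching of the digraph `A` rooted at `r`. -/
def IsInBranching (A B : V → V → Prop) (r : V) : Prop :=
  (∀ x y, B x y → A x y) ∧
  (∀ v, Relation.ReflTransGen B v r) ∧
  (∀ v, v ≠ r → Nat.card {u : V // B v u} = 1) ∧
  (∀ u, ¬ B r u)

/-- A good pair rooted at `r`: arc-disjoint out- and in-branchings rooted at `r`. -/
def GoodPair (A : V → V → Prop) (r : V) : Prop :=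
  ∃ Bp Bm : V → V → Prop, IsOutBranching A Bp r ∧ IsInBranching A Bm r ∧
    ∀ x y, ¬ (Bp x y ∧ Bm x y)

/-- Arc relation of the composition `T[H_1, …, H_t]`. -/
def CompArc {t : ℕ} (T : Fin t → Fin t → Prop) (n : Fin t → ℕ)
    (H : ∀ i : Fin t, Fin (n i) → Fin (n i) → Prop)
    (x y : (i : Fin t) × Fin (n i)) : Prop :=
  (∃ h : x.1 = y.1, H y.1 (h ▸ x.2) y.2) ∨ (x.1 ≠ y.1 ∧ T x.1 y.1)

/-- A semicomplete digraph: some arc between every pair of distinct vertices. -/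
def Semicomplete {α : Type*} (T : α → α → Prop) : Prop :=
  ∀ x y : α, x ≠ y → T x y ∨ T y x

private def powRel {α : Type*} (A : α → α → Prop) : ℕ → α → α → Prop
  | 0 => Eq
  | n+1 => fun a c => ∃ b, powRel A n a b ∧ A b c

private lemma rtg_pow {α : Type*} {A : α → α → Prop} {a b : α}
    (h : Relation.ReflTransGen A a b) : ∃ n, powRel A n a b := by
  induction h with
  | refl => exact ⟨0, rfl⟩
  | tail h1 h2 ih => obtain ⟨m, hm⟩ := ih; exact ⟨m+1, _, hm, h2⟩

private lemma exists_tree {α : Type*} (A : α → α → Prop) (s : α)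
    (h : ∀ i, Relation.ReflTransGen A s i) :
    ∃ (π : α → α) (d : α → ℕ), ∀ i, i ≠ s → A (π i) i ∧ π i ≠ i ∧ d (π i) < d i := by
  classical
  have he : ∀ i, ∃ m, powRel A m s i := fun i => rtg_pow (h i)
  set d : α → ℕ := fun i => Nat.find (he i) with hd
  have hspec : ∀ i, powRel A (d i) s i := fun i => Nat.find_spec (he i)
  have hchoice : ∀ i, i ≠ s → ∃ j, A j i ∧ j ≠ i ∧ d j < d i := by
    intro i hi
    have h0 : d i ≠ 0 := by
      intro h0
      have hs := hspec i
      rw [h0] at hs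
      exact hi hs.symm
    obtain ⟨m, hm⟩ : ∃ m, d i = m + 1 := ⟨d i - 1, by omega⟩
    have hs := hspec i
    rw [hm] at hs
    obtain ⟨j, hj, hji⟩ := hs
    have hdj : d j ≤ m := Nat.find_min' (he j) hj
    refine ⟨j, hji, ?_, by omega⟩
    intro e; rw [e] at hdj; omega
  refine ⟨fun i => if h' : i = s then i else Classical.choose (hchoice i h'), d, ?_⟩
  intro i hi
  simp only [dif_neg hi]
  exact Classical.choose_spec (hchoice i hi)

private lemma exists_last {α : Type*} {A : α → α → Prop} {a b : α}
    (h : Relation.ReflTransGen A a b) : a = b ∨ ∃ q, q ≠ b ∧ A q b := by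
  induction h with
  | @tail c e h1 h2 ih =>
    by_cases hce : c = e
    · subst hce; exact ih
    · exact Or.inr ⟨c, hce, h2⟩
  | refl => exact Or.inl rfl

private lemma sig_fst {t : ℕ} {n : Fin t → ℕ} {a b : (i : Fin t) × Fin (n i)}
    (h : a = b) : a.1 = b.1 := by rw [h]

private lemma sig_snd {t : ℕ} {n : Fin t → ℕ} {i : Fin t} {x y : Fin (n i)}
    (h : (⟨i, x⟩ : (i : Fin t) × Fin (n i)) = ⟨i, y⟩) : x = y :=
  eq_of_heq (Sigma.mk.inj_iff.mp h).2

private lemma rtg_swap {α : Type*} {A : α → α → Prop} {a b : α}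
    (h : Relation.ReflTransGen A a b) : Relation.ReflTransGen (fun x y => A y x) b a := by
  induction h with
  | refl => exact .refl
  | tail h1 h2 ih => exact Relation.ReflTransGen.head h2 ih

/-- If `T` is strong on `t ≥ 2` vertices and each `H i` has at least two
vertices, then the composition `T[H_1,…,H_t]` is strong and has a good pair
rooted at every vertex. -/
theorem stmt6 {t : ℕ} (ht : 2 ≤ t) (T : Fin t → Fin t → Prop)
    (hT : Strong T) (n : Fin t → ℕ) (hn : ∀ i, 2 ≤ n i)
    (H : ∀ i : Fin t, Fin (n i) → Fin (n i) → Prop) :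
    Strong (CompArc T n H) ∧
    ∀ r : (i : Fin t) × Fin (n i), GoodPair (CompArc T n H) r := by
  classical
  obtain ⟨z0, z1, hz⟩ : ∃ (z0 z1 : ∀ i, Fin (n i)), ∀ i, z0 i ≠ z1 i :=
    ⟨fun i => ⟨0, by have := hn i; omega⟩, fun i => ⟨1, by have := hn i; omega⟩,
      fun i => by simp [Fin.ext_iff]⟩
  have other : ∀ i : Fin t, ∃ k : Fin t, k ≠ i := by
    intro i
    by_cases h0 : i.val = 0
    · refine ⟨⟨1, by omega⟩, ?_⟩
      simp only [ne_eq, Fin.ext_iff]; omega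
    · refine ⟨⟨0, by omega⟩, ?_⟩
      simp only [ne_eq, Fin.ext_iff]; omega
  -- moving between distinct blocks
  have Lmove : ∀ i j : Fin t, Relation.ReflTransGen T i j →
      ∀ (x : Fin (n i)) (y : Fin (n j)),
        i = j ∨ Relation.ReflTransGen (CompArc T n H) ⟨i, x⟩ ⟨j, y⟩ := by
    intro i j h
    induction h with
    | refl => intro x y; exact Or.inl rfl
    | @tail c e h1 h2 ih =>
      intro x y
      by_cases hce : c = e
      · subst hce; exact ih x y
      · right
        have harc : ∀ z : Fin (n c), CompArc T n H ⟨c, z⟩ ⟨e, y⟩ :=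
          fun z => Or.inr ⟨hce, h2⟩
        rcases ih x (z0 c) with heq | hr
        · subst heq
          exact Relation.ReflTransGen.single (harc x)
        · exact hr.tail (harc (z0 c))
  have hstrong : Strong (CompArc T n H) := by
    intro a b
    obtain ⟨i, x⟩ := a
    obtain ⟨j, y⟩ := b
    by_cases hij : i = j
    · subst hij
      obtain ⟨k, hk⟩ := other i
      rcases Lmove i k (hT i k) x (z0 k) with h1 | h1
      · exact absurd h1.symm hk
      · rcases Lmove k i (hT k i) (z0 k) y with h2 | h2
        · exact absurd h2 hk
        · exact h1.trans h2
    · rcases Lmove i j (hT i j) x y with h1 | h1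
      · exact absurd h1 hij
      · exact h1
  refine ⟨hstrong, ?_⟩
  intro r
  -- set up trees and special arcs
  obtain ⟨π, d, hπ⟩ := exists_tree T r.1 (fun i => hT r.1 i)
  obtain ⟨σ, dI, hσ⟩ := exists_tree (fun a b => T b a) r.1 (fun i => rtg_swap (hT i r.1))
  obtain ⟨j0, hj0⟩ := other r.1
  obtain ⟨q, hq, hTq⟩ : ∃ q, q ≠ r.1 ∧ T q r.1 := by
    rcases exists_last (hT j0 r.1) with h | h
    · exact absurd h hj0
    · exact h
  obtain ⟨p, hp, hTp⟩ : ∃ p, p ≠ r.1 ∧ T r.1 p := by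
    rcases exists_last (rtg_swap (hT r.1 j0)) with h | h
    · exact absurd h hj0
    · exact h
  -- the two branchings
  refine ⟨fun a b =>
      (b.1 ≠ r.1 ∧ if π b.1 = r.1 then a = r
        else a = ⟨π b.1, if b.2 = z0 b.1 then z0 (π b.1) else z1 (π b.1)⟩) ∨
      (b.1 = r.1 ∧ b ≠ r ∧ a = ⟨q, z0 q⟩),
    fun a b =>
      (a.1 ≠ r.1 ∧ if σ a.1 = r.1 then b = r
        else b = ⟨σ a.1, if a.2 = z0 a.1 then z1 (σ a.1) else z0 (σ a.1)⟩) ∨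
      (a.1 = r.1 ∧ a ≠ r ∧ b = ⟨p, z0 p⟩),
    ⟨?_, ?_, ?_, ?_⟩, ⟨?_, ?_, ?_, ?_⟩, ?_⟩
  -- Bp ⊆ A
  · rintro a b (⟨hb1, hA⟩ | ⟨hb1, hbr, ha⟩)
    · obtain ⟨hT1, hT2, _⟩ := hπ b.1 hb1
      by_cases hπs : π b.1 = r.1
      · rw [if_pos hπs] at hA
        subst hA
        exact Or.inr ⟨by rw [← hπs]; exact hT2, by rw [← hπs]; exact hT1⟩
      · rw [if_neg hπs] at hA
        subst hA
        exact Or.inr ⟨hT2, hT1⟩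
    · subst ha
      exact Or.inr ⟨by simpa [hb1] using hq, by rw [hb1]; exact hTq⟩
  -- Bp reachability from r
  · have R1 : ∀ m (i : Fin t), d i < m → i ≠ r.1 → ∀ x : Fin (n i),
        Relation.ReflTransGen (fun a b : (i : Fin t) × Fin (n i) =>
          (b.1 ≠ r.1 ∧ if π b.1 = r.1 then a = r
            else a = ⟨π b.1, if b.2 = z0 b.1 then z0 (π b.1) else z1 (π b.1)⟩) ∨
          (b.1 = r.1 ∧ b ≠ r ∧ a = ⟨q, z0 q⟩))
          r (⟨i, x⟩ : (i : Fin t) × Fin (n i)) := by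
      intro m
      induction m with
      | zero => intro i h; omega
      | succ m ih =>
        intro i hdi hi x
        obtain ⟨hT1, hT2, hT3⟩ := hπ i hi
        by_cases hπs : π i = r.1
        · refine Relation.ReflTransGen.single (Or.inl ⟨hi, ?_⟩)
          rw [if_pos hπs]
        · refine Relation.ReflTransGen.tail
            (ih (π i) (by omega) hπs (if x = z0 i then z0 (π i) else z1 (π i)))
            (Or.inl ⟨hi, ?_⟩)
          rw [if_neg hπs]
    intro v
    by_cases hv : v = r
    · rw [hv]
    · obtain ⟨i, x⟩ := v
      by_cases hi : i = r.1
      · subst hi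
        refine Relation.ReflTransGen.tail (R1 (d q + 1) q (by omega) hq (z0 q))
          (Or.inr ⟨rfl, hv, rfl⟩)
      · exact R1 (d i + 1) i (by omega) hi x
  -- Bp in-degree one
  · intro v hv
    rw [Nat.card_eq_one_iff_unique]
    constructor
    · constructor
      rintro ⟨u, hu⟩ ⟨u', hu'⟩
      have key : ∀ w, ((v.1 ≠ r.1 ∧ if π v.1 = r.1 then w = r
          else w = ⟨π v.1, if v.2 = z0 v.1 then z0 (π v.1) else z1 (π v.1)⟩) ∨
          (v.1 = r.1 ∧ v ≠ r ∧ w = ⟨q, z0 q⟩)) →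
          w = if h : v.1 = r.1 then ⟨q, z0 q⟩
            else if π v.1 = r.1 then r
            else ⟨π v.1, if v.2 = z0 v.1 then z0 (π v.1) else z1 (π v.1)⟩ := by
        rintro w (⟨h1, h2⟩ | ⟨h1, h2, h3⟩)
        · rw [dif_neg h1]
          by_cases hc : π v.1 = r.1
          · rw [if_pos hc] at h2; rw [if_pos hc]; exact h2
          · rw [if_neg hc] at h2; rw [if_neg hc]; exact h2
        · rw [dif_pos h1]
          exact h3
      exact Subtype.ext ((key u hu).trans (key u' hu').symm)
    · by_cases h1 : v.1 = r.1
      · exact ⟨⟨q, z0 q⟩, Or.inr ⟨h1, hv, rfl⟩⟩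
      · by_cases h2 : π v.1 = r.1
        · exact ⟨r, Or.inl ⟨h1, by rw [if_pos h2]⟩⟩
        · exact ⟨⟨π v.1, if v.2 = z0 v.1 then z0 (π v.1) else z1 (π v.1)⟩,
            Or.inl ⟨h1, by rw [if_neg h2]⟩⟩
  -- Bp: no arcs into r
  · rintro u (⟨h1, _⟩ | ⟨_, h2, _⟩)
    · exact h1 rfl
    · exact h2 rfl
  -- Bm ⊆ A
  · rintro a b (⟨ha1, hA⟩ | ⟨ha1, har, hb⟩)
    · obtain ⟨hT1, hT2, _⟩ := hσ a.1 ha1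
      by_cases hσs : σ a.1 = r.1
      · rw [if_pos hσs] at hA
        subst hA
        exact Or.inr ⟨by rw [← hσs] at ha1 ⊢; exact fun e => hT2 e.symm, by rw [← hσs]; exact hT1⟩
      · rw [if_neg hσs] at hA
        subst hA
        exact Or.inr ⟨fun e => hT2 e.symm, hT1⟩
    · subst hb
      exact Or.inr ⟨by simpa [ha1] using fun e => hp e.symm, by rw [ha1]; exact hTp⟩
  -- Bm reachability to r
  · have R1 : ∀ m (i : Fin t), dI i < m → i ≠ r.1 → ∀ x : Fin (n i),
        Relation.ReflTransGen (fun a b : (i : Fin t) × Fin (n i) =>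
          (a.1 ≠ r.1 ∧ if σ a.1 = r.1 then b = r
            else b = ⟨σ a.1, if a.2 = z0 a.1 then z1 (σ a.1) else z0 (σ a.1)⟩) ∨
          (a.1 = r.1 ∧ a ≠ r ∧ b = ⟨p, z0 p⟩))
          (⟨i, x⟩ : (i : Fin t) × Fin (n i)) r := by
      intro m
      induction m with
      | zero => intro i h; omega
      | succ m ih =>
        intro i hdi hi x
        obtain ⟨hT1, hT2, hT3⟩ := hσ i hi
        by_cases hσs : σ i = r.1
        · refine Relation.ReflTransGen.single (Or.inl ⟨hi, ?_⟩)
          rw [if_pos hσs]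
        · refine Relation.ReflTransGen.head (Or.inl ⟨hi, ?_⟩)
            (ih (σ i) (by omega) hσs (if x = z0 i then z1 (σ i) else z0 (σ i)))
          rw [if_neg hσs]
    intro v
    by_cases hv : v = r
    · rw [hv]
    · obtain ⟨i, x⟩ := v
      by_cases hi : i = r.1
      · subst hi
        refine Relation.ReflTransGen.head (Or.inr ⟨rfl, hv, rfl⟩)
          (R1 (dI p + 1) p (by omega) hp (z0 p))
      · exact R1 (dI i + 1) i (by omega) hi x
  -- Bm out-degree one
  · intro v hv
    rw [Nat.card_eq_one_iff_unique]
    constructor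
    · constructor
      rintro ⟨u, hu⟩ ⟨u', hu'⟩
      have key : ∀ w, ((v.1 ≠ r.1 ∧ if σ v.1 = r.1 then w = r
          else w = ⟨σ v.1, if v.2 = z0 v.1 then z1 (σ v.1) else z0 (σ v.1)⟩) ∨
          (v.1 = r.1 ∧ v ≠ r ∧ w = ⟨p, z0 p⟩)) →
          w = if h : v.1 = r.1 then ⟨p, z0 p⟩
            else if σ v.1 = r.1 then r
            else ⟨σ v.1, if v.2 = z0 v.1 then z1 (σ v.1) else z0 (σ v.1)⟩ := by
        rintro w (⟨h1, h2⟩ | ⟨h1, h2, h3⟩)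
        · rw [dif_neg h1]
          by_cases hc : σ v.1 = r.1
          · rw [if_pos hc] at h2; rw [if_pos hc]; exact h2
          · rw [if_neg hc] at h2; rw [if_neg hc]; exact h2
        · rw [dif_pos h1]
          exact h3
      exact Subtype.ext ((key u hu).trans (key u' hu').symm)
    · by_cases h1 : v.1 = r.1
      · exact ⟨⟨p, z0 p⟩, Or.inr ⟨h1, hv, rfl⟩⟩
      · by_cases h2 : σ v.1 = r.1
        · exact ⟨r, Or.inl ⟨h1, by rw [if_pos h2]⟩⟩
        · exact ⟨⟨σ v.1, if v.2 = z0 v.1 then z1 (σ v.1) else z0 (σ v.1)⟩,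
            Or.inl ⟨h1, by rw [if_neg h2]⟩⟩
  -- Bm: no arcs out of r
  · rintro u (⟨h1, _⟩ | ⟨_, h2, _⟩)
    · exact h1 rfl
    · exact h2 rfl
  -- disjointness
  · rintro x y ⟨hBp, hBm⟩
    obtain ⟨i, xx⟩ := x
    obtain ⟨j, yy⟩ := y
    rcases hBp with ⟨hb1, hA⟩ | ⟨hb1, hbr, ha⟩
    · -- Bp family A: j ≠ r.1
      by_cases hπs : π j = r.1
      · rw [if_pos hπs] at hA
        -- x = r, so x.1 = r.1, contradicting Bm
        rcases hBm with ⟨ha1, _⟩ | ⟨_, har, _⟩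
        · exact ha1 (sig_fst hA)
        · exact har hA
      · rw [if_neg hπs] at hA
        have hi : i = π j := sig_fst hA
        subst hi
        replace hA := sig_snd hA
        rcases hBm with ⟨ha1, hB⟩ | ⟨ha1, _, _⟩
        · by_cases hσs : σ (π j) = r.1
          · rw [if_pos hσs] at hB
            exact hb1 (sig_fst hB)
          · rw [if_neg hσs] at hB
            have hj : j = σ (π j) := sig_fst hB
            rw [← hj] at hB
            replace hB := sig_snd hB
            by_cases hc : yy = z0 j
            · rw [if_pos hc] at hA
              rw [if_pos hA] at hB
              rw [hB] at hc
              exact hz j hc.symm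
            · rw [if_neg hc] at hA
              rw [if_neg (by rw [hA]; exact fun e => hz (π j) e.symm)] at hB
              exact hc hB
        · exact hπs ha1
    · -- Bp family B: j = r.1, x = ⟨q, z0 q⟩
      have hiq : i = q := sig_fst ha
      rcases hBm with ⟨ha1, hB⟩ | ⟨ha1, _, _⟩
      · by_cases hσs : σ i = r.1
        · rw [if_pos hσs] at hB
          exact hbr hB
        · rw [if_neg hσs] at hB
          exact hσs ((sig_fst hB).symm.trans hb1)
      · have hi1 : i = r.1 := ha1
        rw [hiq] at hi1
        exact hq hi1
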